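/- arXiv:2505.09709 — 2 statements merged into one kernel-verified Lean document; each statement's English description precedes it below -/
import Mathlib

section
/- Let v_1,…,v_r ∈ ker(A) and λ_1,…,λ_r ∈ ℤ, and suppose u = λ_1 v_1 + ⋯ + λ_r v_r. Then there exist α, β_1,…,β_r ∈ ℕ^n such that e^α · f_u = e^{β_1} f_{λ_1 v_1} + ⋯ + e^{β_r} f_{λ_r v_r}; in particular a monomial multiple of f_u lies in the ideal generated by f_{v_1},…,f_{v_r}. -/
open MvPolynomial

/-- The monomial `e^a = e_1^{a_1} ⋯ e_n^{a_n}` in `K[e_1,…,e_n]`. -/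
noncomputable def eMon (K : Type*) [CommSemiring K] {n : ℕ} (a : Fin n → ℕ) :
    MvPolynomial (Fin n) K :=
  ∏ i, X i ^ a i

/-- The monomial map `φ_A : K[e_1,…,e_n] → K[x_1,…,x_m]`, `e_i ↦ x^{ς_i}` where
`ς_i` is the `i`-th column of `A`. -/
noncomputable def phiA (K : Type*) [CommSemiring K] {m n : ℕ}
    (A : Matrix (Fin m) (Fin n) ℕ) :
    MvPolynomial (Fin n) K →ₐ[K] MvPolynomial (Fin m) K :=
  aeval fun i => ∏ j, X j ^ A j i

/-- The toric ideal `I_A = ker φ_A`. -/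
noncomputable def toricIdeal (K : Type*) [CommRing K] {m n : ℕ}
    (A : Matrix (Fin m) (Fin n) ℕ) : Ideal (MvPolynomial (Fin n) K) :=
  RingHom.ker (phiA K A).toRingHom

/-- The `K`-linear map `π^{(s)}` sending `e^α ↦ α ⊗ ⋯ ⊗ α` (s factors), where
`(K^n)^{⊗ s}` is identified with functions `(Fin s → Fin n) → K`. -/
noncomputable def piMap (K : Type*) [CommSemiring K] {n : ℕ} (s : ℕ)
    (f : MvPolynomial (Fin n) K) : (Fin s → Fin n) → K :=
  fun j => ∑ α ∈ f.support, f.coeff α * ∏ i : Fin s, (α (j i) : K)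

/-- `V_{A,σ}`: the `K`-span of the monomials `e^α` with `Aα = σ`. -/
noncomputable def fiberSpace (K : Type*) [CommRing K] {m n : ℕ}
    (A : Matrix (Fin m) (Fin n) ℕ) (σ : Fin m → ℕ) :
    Submodule K (MvPolynomial (Fin n) K) :=
  Submodule.span K { f | ∃ a : Fin n → ℕ, (∀ j, ∑ i, A j i * a i = σ j) ∧ f = eMon K a }

/-- The sum `f_σ` of those terms of `f` whose monomial lies in `V_{A,σ}`. -/
noncomputable def fiberComponent {K : Type*} [CommRing K] {m n : ℕ}
    (A : Matrix (Fin m) (Fin n) ℕ) (σ : Fin m → ℕ)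
    (f : MvPolynomial (Fin n) K) : MvPolynomial (Fin n) K :=
  ∑ α ∈ f.support.filter (fun α => ∀ j, ∑ i, A j i * α i = σ j),
    monomial α (f.coeff α)

/-- For a prime ideal `I`, the `t`-th symbolic power
`I^{(t)} = { f | f·g ∈ I^t for some g ∉ I }`. -/
def symbolicPower {R : Type*} [CommRing R] (I : Ideal R) (t : ℕ) : Set R :=
  { f | ∃ g, g ∉ I ∧ f * g ∈ I ^ t }

/-- The saturation `I : x^∞ = { f | x^k f ∈ I for some k }`. -/
def satPow {R : Type*} [CommRing R] (I : Ideal R) (x : R) : Ideal R where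
  carrier := { f | ∃ k : ℕ, x ^ k * f ∈ I }
  zero_mem' := ⟨0, by simp⟩
  add_mem' := by
    rintro a b ⟨k, hk⟩ ⟨l, hl⟩
    refine ⟨k + l, ?_⟩
    have h : x ^ (k + l) * (a + b) = x ^ l * (x ^ k * a) + x ^ k * (x ^ l * b) := by
      ring
    rw [h]
    exact Ideal.add_mem _ (Ideal.mul_mem_left _ _ hk) (Ideal.mul_mem_left _ _ hl)
  smul_mem' := by
    rintro c a ⟨k, hk⟩
    refine ⟨k, ?_⟩
    have h : x ^ k * (c • a) = c * (x ^ k * a) := by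
      rw [smul_eq_mul]; ring
    rw [h]
    exact Ideal.mul_mem_left _ _ hk

/-- The positive part `u^+` of an integer vector. -/
def pPart {n : ℕ} (u : Fin n → ℤ) : Fin n → ℕ := fun i => (u i).toNat

/-- The negative part `u^-` of an integer vector. -/
def nPart {n : ℕ} (u : Fin n → ℤ) : Fin n → ℕ := fun i => (-u i).toNat

/-- The binomial `f_u = e^{u^+} - e^{u^-}`. -/
noncomputable def binom (K : Type*) [CommRing K] {n : ℕ} (u : Fin n → ℤ) :
    MvPolynomial (Fin n) K := eMon K (pPart u) - eMon K (nPart u)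

/-- The lattice `ker A ⊆ ℤ^n`. -/
def matKerZ {m n : ℕ} (A : Matrix (Fin m) (Fin n) ℕ) : Set (Fin n → ℤ) :=
  { u | ∀ j, ∑ i, (A j i : ℤ) * u i = 0 }

/-- The product of all the variables `m = e_1 ⋯ e_n`. -/
noncomputable def mProd (K : Type*) [CommSemiring K] (n : ℕ) :
    MvPolynomial (Fin n) K := ∏ i, X i


section Aux

variable {K : Type*} [CommRing K] {n : ℕ}

lemma eMon_add (a b : Fin n → ℕ) : eMon K (a + b) = eMon K a * eMon K b := by
  simp [eMon, pow_add, Finset.prod_mul_distrib]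

lemma eMon_add' (a b : Fin n → ℕ) :
    eMon K (fun i => a i + b i) = eMon K a * eMon K b := eMon_add a b

lemma binom_zero : binom K (0 : Fin n → ℤ) = 0 := by
  have h : pPart (0 : Fin n → ℤ) = nPart 0 := by funext i; simp [pPart, nPart]
  rw [binom, h, sub_self]

lemma binom_neg (w : Fin n → ℤ) : binom K (-w) = -binom K w := by
  have h1 : pPart (-w) = nPart w := by funext i; simp [pPart, nPart]
  have h2 : nPart (-w) = pPart w := by funext i; simp [pPart, nPart]
  rw [binom, binom, h1, h2]; ring

lemma binom_key (u w : Fin n → ℤ) :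
    ∃ δ : Fin n → ℕ, eMon K δ * binom K (u + w)
      = eMon K (pPart w) * binom K u + eMon K (nPart u) * binom K w := by
  refine ⟨fun i => pPart u i + pPart w i - pPart (u + w) i, ?_⟩
  have hp : eMon K (fun i => pPart u i + pPart w i - pPart (u + w) i) *
      eMon K (pPart (u + w)) = eMon K (pPart u) * eMon K (pPart w) := by
    rw [← eMon_add', ← eMon_add']
    congr 1; funext i
    simp only [pPart, Pi.add_apply]
    omega
  have hn : eMon K (fun i => pPart u i + pPart w i - pPart (u + w) i) *
      eMon K (nPart (u + w)) = eMon K (nPart u) * eMon K (nPart w) := by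
    rw [← eMon_add', ← eMon_add']
    congr 1; funext i
    simp only [pPart, nPart, Pi.add_apply]
    omega
  simp only [binom, mul_sub, sub_mul, hp, hn]
  ring

lemma binom_sum : ∀ (r : ℕ) (w : Fin r → Fin n → ℤ),
    ∃ (α : Fin n → ℕ) (β : Fin r → Fin n → ℕ),
      eMon K α * binom K (∑ i, w i) = ∑ i, eMon K (β i) * binom K (w i) := by
  intro r
  induction r with
  | zero =>
    intro w
    refine ⟨0, Fin.elim0, ?_⟩
    simp [binom_zero]
  | succ r ih =>
    intro w
    obtain ⟨α, β, hαβ⟩ := ih (fun i => w (Fin.succ i))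
    obtain ⟨δ, hδ⟩ := binom_key (K := K) (w 0) (∑ i, w (Fin.succ i))
    refine ⟨α + δ, Fin.cons (α + pPart (∑ i, w (Fin.succ i)))
      (fun i => nPart (w 0) + β i), ?_⟩
    rw [Fin.sum_univ_succ, Fin.sum_univ_succ, Fin.cons_zero]
    have h1 : eMon K (α + δ) * binom K (w 0 + ∑ i, w (Fin.succ i))
        = eMon K α * (eMon K δ * binom K (w 0 + ∑ i, w (Fin.succ i))) := by
      rw [eMon_add]; ring
    rw [h1, hδ, mul_add]
    have h2 : eMon K α * (eMon K (pPart (∑ i, w (Fin.succ i))) * binom K (w 0))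
        = eMon K (α + pPart (∑ i, w (Fin.succ i))) * binom K (w 0) := by
      rw [eMon_add]; ring
    have h3 : eMon K α * (eMon K (nPart (w 0)) * binom K (∑ i, w (Fin.succ i)))
        = eMon K (nPart (w 0)) * (eMon K α * binom K (∑ i, w (Fin.succ i))) := by
      ring
    rw [h2, h3, hαβ, Finset.mul_sum]
    congr 1
    refine Finset.sum_congr rfl fun i _ => ?_
    rw [Fin.cons_succ, eMon_add]; ring

lemma toNat_natCast_mul (k : ℕ) (a : ℤ) : ((k : ℤ) * a).toNat = k * a.toNat := by
  rcases le_or_gt 0 a with h | h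
  · obtain ⟨b, rfl⟩ := Int.eq_ofNat_of_zero_le h
    rw [← Int.natCast_mul, Int.toNat_natCast, Int.toNat_natCast]
  · rw [Int.toNat_of_nonpos (mul_nonpos_of_nonneg_of_nonpos (by positivity) h.le),
      Int.toNat_of_nonpos h.le, mul_zero]

lemma eMon_nsmul (k : ℕ) (a : Fin n → ℕ) :
    eMon K (fun i => k * a i) = eMon K a ^ k := by
  simp only [eMon, ← Finset.prod_pow]
  refine Finset.prod_congr rfl fun i _ => ?_
  rw [mul_comm, pow_mul]

lemma binom_nsmul (k : ℕ) (v : Fin n → ℤ) :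
    binom K ((k : ℤ) • v) = eMon K (pPart v) ^ k - eMon K (nPart v) ^ k := by
  have hp : pPart ((k : ℤ) • v) = fun i => k * pPart v i := by
    funext i; simp [pPart, toNat_natCast_mul]
  have hn : nPart ((k : ℤ) • v) = fun i => k * nPart v i := by
    funext i
    simp only [nPart, Pi.smul_apply, smul_eq_mul, ← mul_neg]
    exact toNat_natCast_mul k (-(v i))
  rw [binom, hp, hn, eMon_nsmul, eMon_nsmul]

lemma binom_dvd_smul (l : ℤ) (v : Fin n → ℤ) : binom K v ∣ binom K (l • v) := by
  rcases le_or_gt 0 l with h | h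
  · obtain ⟨k, rfl⟩ := Int.eq_ofNat_of_zero_le h
    rw [binom_nsmul]
    exact sub_dvd_pow_sub_pow _ _ k
  · obtain ⟨k, hk⟩ := Int.eq_ofNat_of_zero_le (neg_nonneg.mpr h.le)
    have : l • v = -(((k : ℤ)) • v) := by
      funext i; simp only [Pi.neg_apply, Pi.smul_apply, smul_eq_mul]
      rw [← hk]; ring
    rw [this, binom_neg, dvd_neg, binom_nsmul]
    exact sub_dvd_pow_sub_pow _ _ k

end Aux

/-- If `u = λ_1 v_1 + ⋯ + λ_r v_r` with `v_i ∈ ker(A)`, then some monomial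
multiple of `f_u` is a monomial combination of the `f_{λ_i v_i}`; in particular a monomial
multiple of `f_u` lies in the ideal generated by `f_{v_1},…,f_{v_r}`. -/
theorem monomial_multiple_binom
    {K : Type*} [Field K] [IsAlgClosed K] [CharZero K]
    {m n : ℕ} (A : Matrix (Fin m) (Fin n) ℕ)
    (hA : ∀ i, ∃ j, A j i ≠ 0)
    {r : ℕ} (v : Fin r → Fin n → ℤ) (hv : ∀ i, v i ∈ matKerZ A)
    (l : Fin r → ℤ) (u : Fin n → ℤ) (hu : u = ∑ i, l i • v i) :
    (∃ (α : Fin n → ℕ) (β : Fin r → Fin n → ℕ),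
        eMon K α * binom K u = ∑ i, eMon K (β i) * binom K (l i • v i))
    ∧ ∃ γ : Fin n → ℕ,
        eMon K γ * binom K u
          ∈ Ideal.span { g : MvPolynomial (Fin n) K | ∃ i, g = binom K (v i) } := by

  obtain ⟨α, β, hαβ⟩ := binom_sum (K := K) r (fun i => l i • v i)
  rw [← hu] at hαβ
  refine ⟨⟨α, β, hαβ⟩, α, ?_⟩
  rw [hαβ]
  refine Ideal.sum_mem _ fun i _ => ?_
  obtain ⟨c, hc⟩ := binom_dvd_smul (K := K) (l i) (v i)
  rw [hc]
  have hmem : binom K (v i) ∈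
      Ideal.span { g : MvPolynomial (Fin n) K | ∃ i, g = binom K (v i) } :=
    Ideal.subset_span ⟨i, rfl⟩
  have : eMon K (β i) * (binom K (v i) * c) = (eMon K (β i) * c) * binom K (v i) := by
    ring
  rw [this]
  exact Ideal.mul_mem_left _ _ hmem
end

section
/- Let t ≥ 1, let v_1,…,v_t ∈ ker(A) and let β ∈ ℕ^n. Then π^{(t)}(e^β · f_{v_1}⋯f_{v_t}) = π^{(t)}(f_{v_1}⋯f_{v_t}) = Σ_{ω ∈ S_t} v_{ω(1)} ⊗ ⋯ ⊗ v_{ω(t)}, where S_t is the symmetric group on {1,…,t} and each v_i ∈ ℤ^n is regarded as a vector in K^n. -/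
open MvPolynomial

section Aux

variable {K : Type*} [CommRing K] {n : ℕ} {s : ℕ}

lemma piMap_sum_subset (f : MvPolynomial (Fin n) K) {S : Finset (Fin n →₀ ℕ)}
    (hS : f.support ⊆ S) (j : Fin s → Fin n) :
    piMap K s f j = ∑ α ∈ S, f.coeff α * ∏ i : Fin s, (α (j i) : K) := by
  refine Finset.sum_subset hS fun α _ hα => ?_
  rw [MvPolynomial.notMem_support_iff.mp hα, zero_mul]

lemma piMap_add (f g : MvPolynomial (Fin n) K) (j : Fin s → Fin n) :
    piMap K s (f + g) j = piMap K s f j + piMap K s g j := by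
  classical
  rw [piMap_sum_subset (f + g) (MvPolynomial.support_add) j,
    piMap_sum_subset f Finset.subset_union_left j,
    piMap_sum_subset g Finset.subset_union_right j, ← Finset.sum_add_distrib]
  exact Finset.sum_congr rfl fun α _ => by rw [MvPolynomial.coeff_add, add_mul]

lemma piMap_zero (j : Fin s → Fin n) : piMap K s (0 : MvPolynomial (Fin n) K) j = 0 := by
  simp [piMap]

lemma piMap_finsetSum {ι : Type*} (s' : Finset ι) (f : ι → MvPolynomial (Fin n) K)
    (j : Fin s → Fin n) :
    piMap K s (∑ x ∈ s', f x) j = ∑ x ∈ s', piMap K s (f x) j := by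
  classical
  induction s' using Finset.cons_induction with
  | empty => simpa using piMap_zero j
  | cons a s' ha ih => rw [Finset.sum_cons, piMap_add, ih, Finset.sum_cons]

lemma piMap_C_mul (a : K) (f : MvPolynomial (Fin n) K) (j : Fin s → Fin n) :
    piMap K s (C a * f) j = a * piMap K s f j := by
  rw [← MvPolynomial.smul_eq_C_mul,
    piMap_sum_subset (a • f) (Finsupp.support_smul) j, piMap, Finset.mul_sum]
  exact Finset.sum_congr rfl fun α _ => by rw [MvPolynomial.coeff_smul, smul_eq_mul, mul_assoc]

lemma eMon_eq_monomial (a : Fin n → ℕ) :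
    eMon K a = monomial (Finsupp.equivFunOnFinite.symm a) 1 := by
  rw [MvPolynomial.monomial_eq, map_one, one_mul, eMon,
    Finsupp.prod_fintype _ _ (fun i => pow_zero (X i))]
  simp

lemma piMap_eMon [Nontrivial K] (a : Fin n → ℕ) (j : Fin s → Fin n) :
    piMap K s (eMon K a) j = ∏ i : Fin s, (a (j i) : K) := by
  classical
  rw [eMon_eq_monomial, piMap, MvPolynomial.support_monomial]
  simp

lemma eMon_mul (a b : Fin n → ℕ) :
    eMon K a * eMon K b = eMon K (fun k => a k + b k) := by
  rw [eMon, eMon, eMon, ← Finset.prod_mul_distrib]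
  exact Finset.prod_congr rfl fun k _ => (pow_add _ _ _).symm

lemma eMon_prod {ι : Type*} (s' : Finset ι) (c : ι → Fin n → ℕ) :
    ∏ i ∈ s', eMon K (c i) = eMon K (fun k => ∑ i ∈ s', c i k) := by
  simp only [eMon]
  rw [Finset.prod_comm]
  exact Finset.prod_congr rfl fun k _ => Finset.prod_pow_eq_pow_sum s' (fun i => c i k) (X k)

lemma cast_toNat_sub (z : ℤ) : ((z.toNat : K) - ((-z).toNat : K)) = (z : K) := by
  have h : ((z.toNat : ℤ) - ((-z).toNat : ℤ)) = z := by omega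
  calc ((z.toNat : K) - ((-z).toNat : K)) = (((z.toNat : ℤ) - ((-z).toNat : ℤ) : ℤ) : K) := by
        push_cast; ring
    _ = (z : K) := by rw [h]

end Aux

section Key

variable {K : Type*} [CommRing K] [Nontrivial K] {n t : ℕ}

lemma key_piMap (v : Fin t → Fin n → ℤ) (β : Fin n → ℕ) (j : Fin t → Fin n) :
    piMap K t (eMon K β * ∏ i, binom K (v i)) j
      = ∑ ω : Equiv.Perm (Fin t), ∏ i : Fin t, ((v (ω i) (j i) : ℤ) : K) := by
  classical
  set c : Fin t → Bool → Fin n → ℕ := fun i e => if e then pPart (v i) else nPart (v i) with hc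
  set sg : Bool → K := fun e => if e then 1 else -1 with hsg
  -- Step 1: each binomial as a sum over Bool
  have h1 : ∀ i, binom K (v i) = ∑ e : Bool, C (sg e) * eMon K (c i e) := by
    intro i
    rw [Fintype.sum_bool]
    simp [binom, hsg, hc, sub_eq_add_neg]
  -- Step 2: expand the product
  have h2 : eMon K β * ∏ i, binom K (v i)
      = ∑ ε : Fin t → Bool,
          C (∏ i, sg (ε i)) * eMon K (fun k => β k + ∑ i, c i (ε i) k) := by
    have e1 : ∏ i, binom K (v i)
        = ∑ ε : Fin t → Bool, ∏ i, (C (sg (ε i)) * eMon K (c i (ε i))) := by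
      rw [← Fintype.prod_sum (fun (i : Fin t) (e : Bool) => C (sg e) * eMon K (c i e))]
      exact Finset.prod_congr rfl fun i _ => h1 i
    rw [e1, Finset.mul_sum]
    refine Finset.sum_congr rfl fun ε _ => ?_
    rw [Finset.prod_mul_distrib, ← map_prod (C : K →+* MvPolynomial (Fin n) K),
      eMon_prod, mul_left_comm, eMon_mul]
  -- Step 3: apply piMap
  rw [h2, piMap_finsetSum]
  have h3 : ∀ ε : Fin t → Bool,
      piMap K t (C (∏ i, sg (ε i)) * eMon K (fun k => β k + ∑ i, c i (ε i) k)) j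
        = (∏ i, sg (ε i)) *
            ∑ φ : Fin t → Option (Fin t),
              ∏ b, (φ b).elim ((β (j b) : K)) (fun i => ((c i (ε i) (j b) : ℕ) : K)) := by
    intro ε
    rw [piMap_C_mul, piMap_eMon]
    congr 1
    have : ∀ b : Fin t, ((β (j b) + ∑ i, c i (ε i) (j b) : ℕ) : K)
        = ∑ o : Option (Fin t), o.elim ((β (j b) : K)) (fun i => ((c i (ε i) (j b) : ℕ) : K)) := by
      intro b
      rw [Fintype.sum_option]
      push_cast
      rfl
    rw [Finset.prod_congr rfl fun b _ => this b, Fintype.prod_sum]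
  rw [Finset.sum_congr rfl fun ε _ => h3 ε]
  simp only [Finset.mul_sum]
  rw [Finset.sum_comm]
  -- Step 4: inner sum over ε for a fixed φ
  have h4 : ∀ φ : Fin t → Option (Fin t),
      (∑ ε : Fin t → Bool, (∏ i, sg (ε i)) *
          ∏ b, (φ b).elim ((β (j b) : K)) (fun i => ((c i (ε i) (j b) : ℕ) : K)))
        = (∏ b ∈ Finset.univ.filter (fun b => φ b = none), ((β (j b) : K)))
          * ∏ i, ((∏ b ∈ Finset.univ.filter (fun b => φ b = some i), ((pPart (v i) (j b) : ℕ) : K))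
              - (∏ b ∈ Finset.univ.filter (fun b => φ b = some i), ((nPart (v i) (j b) : ℕ) : K))) := by
    intro φ
    have e2 : ∀ ε : Fin t → Bool,
        (∏ b, (φ b).elim ((β (j b) : K)) (fun i => ((c i (ε i) (j b) : ℕ) : K)))
          = (∏ b ∈ Finset.univ.filter (fun b => φ b = none), ((β (j b) : K)))
            * ∏ i, ∏ b ∈ Finset.univ.filter (fun b => φ b = some i),
                ((c i (ε i) (j b) : ℕ) : K) := by
      intro ε
      rw [← Finset.prod_fiberwise Finset.univ φ
        (fun b => (φ b).elim ((β (j b) : K)) (fun i => ((c i (ε i) (j b) : ℕ) : K))),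
        Fintype.prod_option]
      congr 1
      · exact Finset.prod_congr rfl fun b hb => by
          simp [(Finset.mem_filter.mp hb).2]
      · refine Finset.prod_congr rfl fun i _ => Finset.prod_congr rfl fun b hb => ?_
        simp [(Finset.mem_filter.mp hb).2]
    calc (∑ ε : Fin t → Bool, (∏ i, sg (ε i)) *
          ∏ b, (φ b).elim ((β (j b) : K)) (fun i => ((c i (ε i) (j b) : ℕ) : K)))
        = (∏ b ∈ Finset.univ.filter (fun b => φ b = none), ((β (j b) : K)))
          * ∑ ε : Fin t → Bool, ∏ i, (sg (ε i) *
              ∏ b ∈ Finset.univ.filter (fun b => φ b = some i), ((c i (ε i) (j b) : ℕ) : K)) := by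
          rw [Finset.mul_sum]
          refine Finset.sum_congr rfl fun ε _ => ?_
          rw [e2 ε, Finset.prod_mul_distrib]
          ring
      _ = (∏ b ∈ Finset.univ.filter (fun b => φ b = none), ((β (j b) : K)))
          * ∏ i, ∑ e : Bool, (sg e *
              ∏ b ∈ Finset.univ.filter (fun b => φ b = some i), ((c i e (j b) : ℕ) : K)) := by
          rw [Fintype.prod_sum]
      _ = _ := by
          congr 1
          refine Finset.prod_congr rfl fun i _ => ?_
          rw [Fintype.sum_bool]
          simp [hsg, hc, sub_eq_add_neg]
  rw [Finset.sum_congr rfl fun φ _ => h4 φ]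
  -- Step 5: only bijections survive
  set e : Equiv.Perm (Fin t) → (Fin t → Option (Fin t)) := fun σ b => some (σ b) with he
  have hzero : ∀ φ : Fin t → Option (Fin t), φ ∉ Finset.univ.image e →
      (∏ b ∈ Finset.univ.filter (fun b => φ b = none), ((β (j b) : K)))
        * (∏ i, ((∏ b ∈ Finset.univ.filter (fun b => φ b = some i), ((pPart (v i) (j b) : ℕ) : K))
            - (∏ b ∈ Finset.univ.filter (fun b => φ b = some i), ((nPart (v i) (j b) : ℕ) : K))))
        = 0 := by
    intro φ hφ
    by_cases hfib : ∀ i, ∃ b, φ b = some i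
    · exfalso
      apply hφ
      choose g hg using hfib
      have ginj : Function.Injective g := fun i i' h => by
        have h1 := hg i
        rw [h, hg i'] at h1
        exact (Option.some_injective _ h1).symm
      have gbij : Function.Bijective g := Finite.injective_iff_bijective.mp ginj
      let σ : Fin t ≃ Fin t := Equiv.ofBijective g gbij
      refine Finset.mem_image.mpr ⟨σ.symm, Finset.mem_univ _, ?_⟩
      funext b
      have hb : g (σ.symm b) = b := σ.apply_symm_apply b
      show some (σ.symm b) = φ b
      rw [← hg (σ.symm b), hb]
    · push_neg at hfib
      obtain ⟨i0, h0⟩ := hfib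
      have hempty : Finset.univ.filter (fun b => φ b = some i0) = ∅ := by
        ext b
        simp [h0 b]
      refine mul_eq_zero_of_right _ ?_
      refine Finset.prod_eq_zero (Finset.mem_univ i0) ?_
      rw [hempty, Finset.prod_empty, Finset.prod_empty, sub_self]
  rw [← Finset.sum_subset (Finset.subset_univ (Finset.univ.image e))
    (fun φ _ hφ => hzero φ hφ)]
  rw [Finset.sum_image (fun σ _ σ' _ h => Equiv.ext fun b =>
    Option.some_injective _ (congrFun h b))]
  -- Step 6: evaluate at a permutation
  refine Finset.sum_congr rfl fun σ _ => ?_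
  have hnone : Finset.univ.filter (fun b => e σ b = none) = ∅ := by
    ext b
    simp [he]
  have hsome : ∀ i, Finset.univ.filter (fun b => e σ b = some i) = {σ.symm i} := by
    intro i
    ext b
    simp [he, Equiv.apply_eq_iff_eq_symm_apply]
  rw [hnone, Finset.prod_empty, one_mul]
  have hfac : ∀ i : Fin t,
      ((∏ b ∈ Finset.univ.filter (fun b => e σ b = some i), ((pPart (v i) (j b) : ℕ) : K))
        - (∏ b ∈ Finset.univ.filter (fun b => e σ b = some i), ((nPart (v i) (j b) : ℕ) : K)))
      = ((v i (j (σ.symm i)) : ℤ) : K) := by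
    intro i
    rw [hsome i, Finset.prod_singleton, Finset.prod_singleton, pPart, nPart,
      cast_toNat_sub (v i (j (σ.symm i)))]
  rw [Finset.prod_congr rfl fun i _ => hfac i,
    ← Equiv.prod_comp σ (fun i => ((v i (j (σ.symm i)) : ℤ) : K))]
  exact Finset.prod_congr rfl fun i _ => by rw [Equiv.symm_apply_apply]

end Key


/-- For `t ≥ 1`, `v_1,…,v_t ∈ ker(A)` and `β ∈ ℕ^n`:
`π^{(t)}(e^β·f_{v_1}⋯f_{v_t}) = π^{(t)}(f_{v_1}⋯f_{v_t}) = Σ_{ω ∈ S_t} v_{ω(1)} ⊗ ⋯ ⊗ v_{ω(t)}`. -/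
theorem piMap_prod_binom
    {K : Type*} [Field K] [IsAlgClosed K] [CharZero K]
    {m n : ℕ} (A : Matrix (Fin m) (Fin n) ℕ)
    (hA : ∀ i, ∃ j, A j i ≠ 0)
    (t : ℕ) (ht : 1 ≤ t)
    (v : Fin t → Fin n → ℤ) (hv : ∀ i, v i ∈ matKerZ A) (β : Fin n → ℕ) :
    piMap K t (eMon K β * ∏ i, binom K (v i)) = piMap K t (∏ i, binom K (v i))
    ∧ piMap K t (∏ i, binom K (v i))
        = fun j : Fin t → Fin n =>
            ∑ ω : Equiv.Perm (Fin t), ∏ i : Fin t, ((v (ω i) (j i) : ℤ) : K) := by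
  have h0 : ∀ β' : Fin n → ℕ, piMap K t (eMon K β' * ∏ i, binom K (v i))
      = fun j : Fin t → Fin n =>
          ∑ ω : Equiv.Perm (Fin t), ∏ i : Fin t, ((v (ω i) (j i) : ℤ) : K) :=
    fun β' => funext fun j => key_piMap v β' j
  have h1 : piMap K t (∏ i, binom K (v i))
      = fun j : Fin t → Fin n =>
          ∑ ω : Equiv.Perm (Fin t), ∏ i : Fin t, ((v (ω i) (j i) : ℤ) : K) := by
    have hone : (∏ i, binom K (v i)) = eMon K (fun _ => 0) * ∏ i, binom K (v i) := by
      simp [eMon]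
    rw [hone]
    exact h0 _
  exact ⟨(h0 β).trans h1.symm, h1⟩
end
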